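/- A connected signed weighted graph G is strictly unbalanced if and only if ρ(W) < ρ(W̄), where W is its signed weighted adjacency matrix, W̄ is the entrywise absolute value of W, and ρ denotes spectral radius. -/

import Mathlib

/-- The spectral radius of a real matrix. -/
noncomputable def specRad {n : ℕ} (M : Matrix (Fin n) (Fin n) ℝ) : ℝ :=
  sSup (abs '' spectrum ℝ M)

open Matrix Finset in
/-- Spectral data for a real symmetric matrix: an eigenpair realising the spectral
radius, the Rayleigh bound, and the equality case of the Rayleigh bound. -/
lemma symSpec {n : ℕ} (hn : 0 < n) (M : Matrix (Fin n) (Fin n) ℝ) (hM : M.IsSymm) :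
    ∃ (lam : ℝ) (v : Fin n → ℝ),
      |lam| = specRad M ∧ v ≠ 0 ∧ M *ᵥ v = lam • v ∧
      (∀ x : Fin n → ℝ, |x ⬝ᵥ (M *ᵥ x)| ≤ specRad M * (x ⬝ᵥ x)) ∧
      (∀ x : Fin n → ℝ, x ⬝ᵥ (M *ᵥ x) = specRad M * (x ⬝ᵥ x) →
        M *ᵥ x = specRad M • x) := by
  classical
  have hH : M.IsHermitian := by
    rwa [Matrix.IsHermitian, Matrix.conjTranspose_eq_transpose_of_trivial]
  set μ : Fin n → ℝ := hH.eigenvalues with hμdef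
  set e : Fin n → (Fin n → ℝ) := fun j => ⇑(hH.eigenvectorBasis j) with hedef
  have heig : ∀ j, M *ᵥ e j = μ j • e j := fun j => hH.mulVec_eigenvectorBasis j
  have horth : ∀ j k, e j ⬝ᵥ e k = if j = k then 1 else 0 := by
    intro j k
    have h := orthonormal_iff_ite.mp hH.eigenvectorBasis.orthonormal j k
    simp [PiLp.inner_apply, RCLike.inner_apply, conj_trivial, dotProduct] at h
    rw [← h]
    exact Finset.sum_congr rfl fun i _ => mul_comm _ _
  have hexp : ∀ (x : Fin n → ℝ) (k : Fin n), x k = ∑ j, (e j ⬝ᵥ x) * e j k := by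
    intro x k
    have h := hH.eigenvectorBasis.sum_repr'
      ((WithLp.equiv 2 (Fin n → ℝ)).symm x)
    have h2 := congrArg (WithLp.linearEquiv 2 ℝ (Fin n → ℝ)) h
    rw [map_sum] at h2
    simp only [_root_.map_smul] at h2
    have h3 := congrArg (fun f => f k) h2
    have h4 := h3.symm
    simp [Finset.sum_apply, smul_eq_mul, PiLp.inner_apply,
      RCLike.inner_apply, conj_trivial, dotProduct, WithLp.linearEquiv_apply,
      hedef] at h4
    exact h4.trans (Finset.sum_congr rfl fun j _ => by
      congr 1; exact Finset.sum_congr rfl fun i _ => mul_comm _ _)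
  have key : ∀ x y : Fin n → ℝ, x ⬝ᵥ y = ∑ j, (e j ⬝ᵥ x) * (e j ⬝ᵥ y) := by
    intro x y
    calc x ⬝ᵥ y = ∑ i, x i * y i := rfl
    _ = ∑ i, (∑ j, (e j ⬝ᵥ x) * e j i) * y i :=
        Finset.sum_congr rfl fun i _ => by rw [← hexp x i]
    _ = ∑ i, ∑ j, (e j ⬝ᵥ x) * (e j i * y i) := by
        simp [Finset.sum_mul, mul_assoc]
    _ = ∑ j, ∑ i, (e j ⬝ᵥ x) * (e j i * y i) := Finset.sum_comm
    _ = ∑ j, (e j ⬝ᵥ x) * (e j ⬝ᵥ y) := by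
        simp [dotProduct, Finset.mul_sum]
  have hMe : ∀ (j : Fin n) (x : Fin n → ℝ),
      e j ⬝ᵥ (M *ᵥ x) = μ j * (e j ⬝ᵥ x) := by
    intro j x
    rw [Matrix.dotProduct_mulVec]
    have hvm : e j ᵥ* M = μ j • e j := by
      rw [← Matrix.mulVec_transpose, hM, heig j]
    rw [hvm, smul_dotProduct, smul_eq_mul]
  have hdot1 : ∀ x : Fin n → ℝ, x ⬝ᵥ x = ∑ j, (e j ⬝ᵥ x) ^ 2 := by
    intro x; rw [key x x]; simp [sq]
  have hdot2 : ∀ x : Fin n → ℝ, x ⬝ᵥ (M *ᵥ x) = ∑ j, μ j * (e j ⬝ᵥ x) ^ 2 := by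
    intro x; rw [key x (M *ᵥ x)]
    exact Finset.sum_congr rfl fun j _ => by rw [hMe j x, sq]; ring
  obtain ⟨i₀, -, hmax⟩ :=
    Finset.exists_max_image Finset.univ (fun j => |μ j|) ⟨⟨0, hn⟩, Finset.mem_univ _⟩
  have hmax' : ∀ j, |μ j| ≤ |μ i₀| := fun j => hmax j (Finset.mem_univ j)
  -- Rayleigh bound with r = |μ i₀|
  have hray : ∀ x : Fin n → ℝ, |x ⬝ᵥ (M *ᵥ x)| ≤ |μ i₀| * (x ⬝ᵥ x) := by
    intro x
    rw [hdot2 x, hdot1 x, Finset.mul_sum]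
    refine (Finset.abs_sum_le_sum_abs _ _).trans (Finset.sum_le_sum fun j _ => ?_)
    rw [abs_mul, abs_of_nonneg (sq_nonneg (e j ⬝ᵥ x))]
    exact mul_le_mul_of_nonneg_right (hmax' j) (sq_nonneg _)
  have hposdot : ∀ x : Fin n → ℝ, x ≠ 0 → 0 < x ⬝ᵥ x := by
    intro x hx
    obtain ⟨i, hi⟩ := Function.ne_iff.mp hx
    refine Finset.sum_pos' (fun k _ => mul_self_nonneg _) ⟨i, Finset.mem_univ i, ?_⟩
    exact mul_self_pos.mpr hi
  -- every element of the spectrum is bounded by |μ i₀|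
  have hspecsub : ∀ z ∈ spectrum ℝ M, |z| ≤ |μ i₀| := by
    intro z hz
    rw [← AlgEquiv.spectrum_eq (Matrix.toLinAlgEquiv <| Pi.basisFun ℝ (Fin n)),
      ← Module.End.hasEigenvalue_iff_mem_spectrum] at hz
    have hz' : Module.End.HasEigenvalue (Matrix.toLin' M) z := hz
    obtain ⟨w, hw⟩ := hz'.exists_hasEigenvector
    have hwv : M *ᵥ w = z • w := by
      rw [← Matrix.toLin'_apply]; exact hw.apply_eq_smul
    have h1 : w ⬝ᵥ (M *ᵥ w) = z * (w ⬝ᵥ w) := by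
      rw [hwv, dotProduct_smul, smul_eq_mul]
    have h2 := hray w
    rw [h1, abs_mul, abs_of_nonneg (le_of_lt (hposdot w hw.2))] at h2
    exact le_of_mul_le_mul_right h2 (hposdot w hw.2)
  have hIsG : IsGreatest (abs '' spectrum ℝ M) |μ i₀| :=
    ⟨⟨μ i₀, hH.eigenvalues_mem_spectrum_real i₀, rfl⟩,
      by rintro y ⟨z, hz, rfl⟩; exact hspecsub z hz⟩
  have hsr : specRad M = |μ i₀| := hIsG.csSup_eq
  -- equality case
  have heqcase : ∀ x : Fin n → ℝ, x ⬝ᵥ (M *ᵥ x) = |μ i₀| * (x ⬝ᵥ x) →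
      M *ᵥ x = |μ i₀| • x := by
    intro x hx
    have h0 : ∑ j, (|μ i₀| - μ j) * (e j ⬝ᵥ x) ^ 2 = 0 := by
      have : ∑ j, (|μ i₀| - μ j) * (e j ⬝ᵥ x) ^ 2
          = |μ i₀| * (x ⬝ᵥ x) - x ⬝ᵥ (M *ᵥ x) := by
        rw [hdot1 x, hdot2 x, Finset.mul_sum, ← Finset.sum_sub_distrib]
        exact Finset.sum_congr rfl fun j _ => by ring
      rw [this, hx, sub_self]
    have hterm : ∀ j, (|μ i₀| - μ j) * (e j ⬝ᵥ x) ^ 2 = 0 := by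
      intro j
      refine (Finset.sum_eq_zero_iff_of_nonneg fun j _ => ?_).mp h0 j (Finset.mem_univ j)
      exact mul_nonneg (sub_nonneg.mpr ((le_abs_self _).trans (hmax' j))) (sq_nonneg _)
    have hcoef : ∀ j, μ j * (e j ⬝ᵥ x) = |μ i₀| * (e j ⬝ᵥ x) := by
      intro j
      rcases mul_eq_zero.mp (hterm j) with h | h
      · rw [sub_eq_zero] at h; rw [← h]
      · rw [pow_eq_zero_iff (two_ne_zero)] at h; rw [h, mul_zero, mul_zero]
    funext k
    have hL : (M *ᵥ x) k = ∑ j, (μ j * (e j ⬝ᵥ x)) * e j k := by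
      rw [hexp (M *ᵥ x) k]
      exact Finset.sum_congr rfl fun j _ => by rw [hMe j x]
    have hR : (|μ i₀| • x) k = ∑ j, (|μ i₀| * (e j ⬝ᵥ x)) * e j k := by
      simp only [Pi.smul_apply, smul_eq_mul]
      rw [hexp x k, Finset.mul_sum]
      exact Finset.sum_congr rfl fun j _ => by ring
    rw [hL, hR]
    exact Finset.sum_congr rfl fun j _ => by rw [hcoef j]
  have hv0 : e i₀ ≠ 0 := by
    intro h
    have := horth i₀ i₀
    rw [h, if_pos rfl] at this
    simp at this
  exact ⟨μ i₀, e i₀, by rw [hsr], hv0, heig i₀,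
    by rw [hsr]; exact hray, by rw [hsr]; exact heqcase⟩

open Matrix Finset in
lemma pow_entry_nonneg {n : ℕ} (B : Matrix (Fin n) (Fin n) ℝ)
    (hB : ∀ i j, 0 ≤ B i j) (m : ℕ) : ∀ i j, 0 ≤ (B ^ m) i j := by
  induction m with
  | zero => intro i j; rw [pow_zero]; by_cases h : i = j <;> simp [Matrix.one_apply, h]
  | succ m ih =>
    intro i j
    rw [pow_succ, Matrix.mul_apply]
    exact Finset.sum_nonneg fun k _ => mul_nonneg (ih i k) (hB k j)

open Matrix in
lemma spectrum_conj_diag {n : ℕ} (D B : Matrix (Fin n) (Fin n) ℝ) (hD : D * D = 1) :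
    spectrum ℝ (D * B * D) = spectrum ℝ B := by
  have hDu : IsUnit D := isUnit_iff_exists.mpr ⟨D, hD, hD⟩
  ext z
  simp only [spectrum.mem_iff]
  have hkey : (algebraMap ℝ (Matrix (Fin n) (Fin n) ℝ)) z - D * B * D
      = D * ((algebraMap ℝ (Matrix (Fin n) (Fin n) ℝ)) z - B) * D := by
    rw [Matrix.mul_sub, Matrix.sub_mul]
    congr 1
    rw [Algebra.algebraMap_eq_smul_one, Matrix.mul_smul, mul_one, Matrix.smul_mul, hD]
  rw [hkey]
  constructor
  · intro h hu
    exact h ((hDu.mul hu).mul hDu)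
  · intro h hu
    apply h
    have harr : D * (D * ((algebraMap ℝ (Matrix (Fin n) (Fin n) ℝ)) z - B) * D) * D
        = (D * D) * ((algebraMap ℝ (Matrix (Fin n) (Fin n) ℝ)) z - B) * (D * D) := by
      noncomm_ring
    have : (algebraMap ℝ (Matrix (Fin n) (Fin n) ℝ)) z - B
        = D * (D * ((algebraMap ℝ (Matrix (Fin n) (Fin n) ℝ)) z - B) * D) * D := by
      rw [harr, hD, one_mul, mul_one]
    rw [this]
    exact (hDu.mul hu).mul hDu

lemma abs_image_spectrum_neg {n : ℕ} (B : Matrix (Fin n) (Fin n) ℝ) :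
    abs '' spectrum ℝ (-B) = abs '' spectrum ℝ B := by
  have hmem : ∀ (C : Matrix (Fin n) (Fin n) ℝ) (z : ℝ), z ∈ spectrum ℝ (-C) → -z ∈ spectrum ℝ C := by
    intro C z hz
    rw [spectrum.mem_iff] at hz ⊢
    intro hu
    apply hz
    have : (algebraMap ℝ (Matrix (Fin n) (Fin n) ℝ)) z - (-C)
        = -((algebraMap ℝ (Matrix (Fin n) (Fin n) ℝ)) (-z) - C) := by
      simp only [map_neg, neg_sub, sub_neg_eq_add]
      abel
    rw [this]
    exact hu.neg
  ext y
  constructor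
  · rintro ⟨z, hz, rfl⟩
    exact ⟨-z, hmem B z hz, abs_neg z⟩
  · rintro ⟨z, hz, rfl⟩
    have : z ∈ spectrum ℝ (- -B) := by rwa [neg_neg]
    have h2 := hmem (-B) z this
    exact ⟨-z, h2, abs_neg z⟩

open Matrix Finset

/-- A connected signed weighted graph is strictly unbalanced (neither balanced
nor antibalanced) if and only if ρ(W) < ρ(W̄). -/
theorem strictly_unbalanced_iff_spectral_radius_lt {n : ℕ}
    (W : Matrix (Fin n) (Fin n) ℝ) (hW : W.IsSymm)
    (hconn : ∀ i j : Fin n, ∃ m : ℕ, ((Matrix.of fun a b => |W a b|) ^ m) i j ≠ 0) :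
    ((¬ ∃ σ : Fin n → ℝ, (∀ i, σ i = 1 ∨ σ i = -1) ∧
        ∀ i j, W i j = σ i * |W i j| * σ j) ∧
     (¬ ∃ σ : Fin n → ℝ, (∀ i, σ i = 1 ∨ σ i = -1) ∧
        ∀ i j, W i j = -(σ i * |W i j| * σ j))) ↔
    specRad W < specRad (Matrix.of fun a b => |W a b|) := by
  classical
  set B : Matrix (Fin n) (Fin n) ℝ := Matrix.of fun a b => |W a b| with hBdef
  have hBapp : ∀ i j, B i j = |W i j| := fun i j => rfl
  have hBnn : ∀ i j, 0 ≤ B i j := fun i j => by rw [hBapp]; exact abs_nonneg _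
  have hBsymm : B.IsSymm := by
    ext i j
    rw [Matrix.transpose_apply, hBapp, hBapp, hW.apply i j]
  constructor
  · -- strictly unbalanced → strict inequality
    rintro ⟨hbal, hanti⟩
    by_contra hge
    push_neg at hge
    rcases Nat.eq_zero_or_pos n with hn0 | hn
    · subst hn0
      exact hbal ⟨fun i => i.elim0, fun i => i.elim0, fun i => i.elim0⟩
    obtain ⟨lam, v, hlam, hv0, hveig, -, -⟩ := symSpec hn W hW
    obtain ⟨lamB, vB, hlamB, hvB0, hvBeig, hrayB, heqB⟩ := symSpec hn B hBsymm
    set u : Fin n → ℝ := fun i => |v i| with hudef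
    have hPpos : 0 < v ⬝ᵥ v := by
      obtain ⟨i, hi⟩ := Function.ne_iff.mp hv0
      have hd : v ⬝ᵥ v = ∑ k, v k * v k := rfl
      rw [hd]
      exact Finset.sum_pos' (fun k _ => mul_self_nonneg _)
        ⟨i, Finset.mem_univ i, mul_self_pos.mpr hi⟩
    have huu : u ⬝ᵥ u = v ⬝ᵥ v :=
      Finset.sum_congr rfl fun i _ => abs_mul_abs_self (v i)
    have hvWv : v ⬝ᵥ (W *ᵥ v) = lam * (v ⬝ᵥ v) := by
      rw [hveig, dotProduct_smul, smul_eq_mul]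
    have hWform : v ⬝ᵥ (W *ᵥ v) = ∑ i, ∑ j, v i * (W i j * v j) := by
      simp [dotProduct, Matrix.mulVec, Finset.mul_sum]
    have hBform : u ⬝ᵥ (B *ᵥ u) = ∑ i, ∑ j, |v i * (W i j * v j)| := by
      simp [dotProduct, Matrix.mulVec, Finset.mul_sum, hBdef, hudef, abs_mul]
    have htri : |v ⬝ᵥ (W *ᵥ v)| ≤ u ⬝ᵥ (B *ᵥ u) := by
      rw [hWform, hBform]
      exact (Finset.abs_sum_le_sum_abs _ _).trans
        (Finset.sum_le_sum fun i _ => Finset.abs_sum_le_sum_abs _ _)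
    have h5 : u ⬝ᵥ (B *ᵥ u) ≤ specRad B * (u ⬝ᵥ u) := (le_abs_self _).trans (hrayB u)
    have habsW : |v ⬝ᵥ (W *ᵥ v)| = |lam| * (v ⬝ᵥ v) := by
      rw [hvWv, abs_mul, abs_of_pos hPpos]
    have e1 : specRad W * (v ⬝ᵥ v) ≤ u ⬝ᵥ (B *ᵥ u) := by
      rw [← hlam, ← habsW]; exact htri
    have e2 : u ⬝ᵥ (B *ᵥ u) ≤ specRad W * (v ⬝ᵥ v) := by
      calc u ⬝ᵥ (B *ᵥ u) ≤ specRad B * (u ⬝ᵥ u) := h5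
      _ = specRad B * (v ⬝ᵥ v) := by rw [huu]
      _ ≤ specRad W * (v ⬝ᵥ v) := mul_le_mul_of_nonneg_right hge (le_of_lt hPpos)
    have hBu_eq : u ⬝ᵥ (B *ᵥ u) = specRad B * (u ⬝ᵥ u) := by
      refine le_antisymm h5 ?_
      calc specRad B * (u ⬝ᵥ u) = specRad B * (v ⬝ᵥ v) := by rw [huu]
      _ ≤ specRad W * (v ⬝ᵥ v) := mul_le_mul_of_nonneg_right hge (le_of_lt hPpos)
      _ ≤ u ⬝ᵥ (B *ᵥ u) := e1
    have hBu : B *ᵥ u = specRad B • u := heqB u hBu_eq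
    have habs : |v ⬝ᵥ (W *ᵥ v)| = u ⬝ᵥ (B *ᵥ u) := by
      refine le_antisymm htri ?_
      rw [habsW, hlam]; exact e2
    have hlamP : |lam| * (v ⬝ᵥ v) = u ⬝ᵥ (B *ᵥ u) := by rw [← habsW, habs]
    -- Perron positivity
    have hBpow : ∀ m : ℕ, (B ^ m) *ᵥ u = (specRad B ^ m) • u := by
      intro m
      induction m with
      | zero => simp [Matrix.one_mulVec]
      | succ m ih =>
        rw [pow_succ, ← Matrix.mulVec_mulVec, hBu, Matrix.mulVec_smul, ih,
          smul_smul, pow_succ, mul_comm (specRad B)]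
    have hupos : ∀ i, 0 < u i := by
      obtain ⟨i₁, hi₁⟩ := Function.ne_iff.mp hv0
      intro i
      obtain ⟨m, hm⟩ := hconn i i₁
      have hBm := pow_entry_nonneg B hBnn m
      have hpos : 0 < ((B ^ m) *ᵥ u) i := by
        have hle : (B ^ m) i i₁ * u i₁ ≤ ∑ k, (B ^ m) i k * u k :=
          Finset.single_le_sum (fun k _ => mul_nonneg (hBm i k) (abs_nonneg _))
            (Finset.mem_univ i₁)
        have hpos' : 0 < (B ^ m) i i₁ * u i₁ :=
          mul_pos ((hBm i i₁).lt_of_ne (Ne.symm hm)) (abs_pos.mpr hi₁)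
        exact lt_of_lt_of_le hpos' hle
      rw [hBpow m] at hpos
      simp only [Pi.smul_apply, smul_eq_mul] at hpos
      have hge0 : 0 ≤ u i := abs_nonneg (v i)
      rcases hge0.lt_or_eq with h | h
      · exact h
      · exfalso
        have hpos' : 0 < specRad B ^ m * u i := hpos
        rw [← h, mul_zero] at hpos'
        exact absurd hpos' (lt_irrefl 0)
    have hvne : ∀ i, v i ≠ 0 := fun i => abs_pos.mp (hupos i)
    -- sign analysis
    set ε : ℝ := if 0 < lam then 1 else -1 with hε
    have hεlam : ε * lam = |lam| := by
      rw [hε]; split_ifs with h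
      · rw [one_mul, abs_of_pos h]
      · rw [abs_of_nonpos (le_of_not_gt h)]; ring
    have hε2 : ε * ε = 1 := by rw [hε]; split_ifs <;> norm_num
    have habsε : |ε| = 1 := by rw [hε]; split_ifs <;> norm_num
    have hsum : ∑ p : Fin n × Fin n,
        (|v p.1 * (W p.1 p.2 * v p.2)| - ε * (v p.1 * (W p.1 p.2 * v p.2))) = 0 := by
      rw [Finset.sum_sub_distrib]
      have hA : ∑ p : Fin n × Fin n, |v p.1 * (W p.1 p.2 * v p.2)| = u ⬝ᵥ (B *ᵥ u) := by
        rw [hBform, Fintype.sum_prod_type]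
      have hB' : ∑ p : Fin n × Fin n, ε * (v p.1 * (W p.1 p.2 * v p.2))
          = ε * (v ⬝ᵥ (W *ᵥ v)) := by
        rw [← Finset.mul_sum, hWform, Fintype.sum_prod_type]
      rw [hA, hB', hvWv, ← mul_assoc, hεlam, hlamP, sub_self]
    have hterm : ∀ i j, ε * (v i * (W i j * v j)) = |v i * (W i j * v j)| := by
      intro i j
      have hnn : ∀ p : Fin n × Fin n, p ∈ Finset.univ →
          0 ≤ |v p.1 * (W p.1 p.2 * v p.2)| - ε * (v p.1 * (W p.1 p.2 * v p.2)) := by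
        intro p _
        refine sub_nonneg.mpr ((le_abs_self _).trans ?_)
        rw [abs_mul, habsε, one_mul]
      have h0 := (Finset.sum_eq_zero_iff_of_nonneg hnn).mp hsum (i, j) (Finset.mem_univ _)
      simp only at h0
      linarith
    set σ : Fin n → ℝ := fun i => if 0 < v i then 1 else -1 with hσ
    have hσv : ∀ i, σ i * v i = |v i| := by
      intro i; rw [hσ]; dsimp only; split_ifs with h
      · rw [one_mul, abs_of_pos h]
      · rw [abs_of_nonpos (le_of_not_gt h)]; ring
    have hσpm : ∀ i, σ i = 1 ∨ σ i = -1 := by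
      intro i; rw [hσ]; dsimp only; split_ifs
      · exact Or.inl rfl
      · exact Or.inr rfl
    have hkey : ∀ i j, W i j = ε * (σ i * |W i j| * σ j) := by
      intro i j
      have h1 := hterm i j
      have h2 : |v i * (W i j * v j)| = (σ i * v i) * (|W i j| * (σ j * v j)) := by
        rw [hσv i, hσv j, abs_mul, abs_mul]
      rw [h2] at h1
      have h3 : (ε * W i j - σ i * |W i j| * σ j) * (v i * v j) = 0 := by
        linear_combination h1
      have h4 : ε * W i j = σ i * |W i j| * σ j := by
        rcases mul_eq_zero.mp h3 with h | h
        · exact sub_eq_zero.mp h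
        · exact absurd h (mul_ne_zero (hvne i) (hvne j))
      calc W i j = ε * (ε * W i j) := by rw [← mul_assoc, hε2, one_mul]
      _ = ε * (σ i * |W i j| * σ j) := by rw [h4]
    have hεcases : ε = 1 ∨ ε = -1 := by
      rw [hε]; split_ifs
      · exact Or.inl rfl
      · exact Or.inr rfl
    rcases hεcases with h | h
    · exact hbal ⟨σ, hσpm, fun i j => by have := hkey i j; rwa [h, one_mul] at this⟩
    · refine hanti ⟨σ, hσpm, fun i j => ?_⟩
      have := hkey i j
      rw [h] at this
      linear_combination this
  · -- balanced or antibalanced gives equal spectral radii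
    intro hlt
    have hDD : ∀ σ : Fin n → ℝ, (∀ i, σ i = 1 ∨ σ i = -1) →
        (Matrix.diagonal σ) * (Matrix.diagonal σ) = 1 := by
      intro σ hσpm
      rw [Matrix.diagonal_mul_diagonal]
      have : (fun i => σ i * σ i) = fun _ => (1 : ℝ) := by
        funext i; rcases hσpm i with h | h <;> rw [h] <;> norm_num
      rw [this, Matrix.diagonal_one]
    constructor
    · rintro ⟨σ, hσpm, hσ⟩
      have hWeq : W = Matrix.diagonal σ * B * Matrix.diagonal σ := by
        ext i j
        rw [Matrix.mul_diagonal, Matrix.diagonal_mul, hBapp]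
        exact hσ i j
      have heq : specRad W = specRad B := by
        rw [specRad, specRad, hWeq, spectrum_conj_diag _ _ (hDD σ hσpm)]
      rw [heq] at hlt
      exact lt_irrefl _ hlt
    · rintro ⟨σ, hσpm, hσ⟩
      have hWeq : W = Matrix.diagonal σ * (-B) * Matrix.diagonal σ := by
        ext i j
        rw [Matrix.mul_diagonal, Matrix.diagonal_mul, Matrix.neg_apply, hBapp]
        linear_combination hσ i j
      have heq : specRad W = specRad B := by
        rw [specRad, specRad, hWeq, spectrum_conj_diag _ _ (hDD σ hσpm),
          abs_image_spectrum_neg]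
      rw [heq] at hlt
      exact lt_irrefl _ hlt
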